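/- Let n ≥ 9 and let F be a spanning facet of Δ₃(W_n) for the shelling order ≺, with F ∈ T_s and F^c = {α_s} ⊔ {s_1, s_2}. Then α_s ∉ {0, 1, 2, n−2, n−1} and s_2 = n−1. -/

import Mathlib

open Finset

/-- The squared cycle graph `Wₙ` on the vertex set `{0, 1, …, n−1} ⊆ ℕ`:
`x` and `y` are adjacent iff `x − y ≡ ±1, ±2 (mod n)`. -/
def sqCycle (n : ℕ) : SimpleGraph ℕ where
  Adj x y := x < n ∧ y < n ∧ x ≠ y ∧
    ((x + 1) % n = y ∨ (x + 2) % n = y ∨ (y + 1) % n = x ∨ (y + 2) % n = x)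
  symm := by
    constructor
    rintro x y ⟨hx, hy, hxy, h⟩
    exact ⟨hy, hx, hxy.symm, by tauto⟩
  loopless := by
    constructor
    rintro x ⟨-, -, hxx, -⟩
    exact hxx rfl

/-- The complement `F^c` of `F` in the vertex set of `Wₙ`. -/
def cmpl (n : ℕ) (F : Finset ℕ) : Finset ℕ := Finset.range n \ F

/-- `F` is a facet of the 3-cut complex `Δ₃(Wₙ)` : an `(n−3)`-subset of the
vertex set whose complement induces a disconnected subgraph. -/
def IsFacet (n : ℕ) (F : Finset ℕ) : Prop :=
  F ⊆ Finset.range n ∧ F.card = n - 3 ∧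
    ¬ ((sqCycle n).induce (↑(cmpl n F) : Set ℕ)).Connected

/-- `m = (n+1)/2` if `n` is odd and `m = n/2` if `n` is even. -/
def mVal (n : ℕ) : ℕ := (n + 1) / 2

/-- `α_t = m + (−1)^(t−1) ⌊t/2⌋ (mod n)`. -/
def alphaSeq (n t : ℕ) : ℕ :=
  ((((mVal n : ℤ) + (-1) ^ (t - 1) * ((t / 2 : ℕ) : ℤ)) % (n : ℤ))).toNat

/-- `x <_O y` : `x` appears strictly before `y` in `O = (α_1, …, α_n)`. -/
def ltO (n x y : ℕ) : Prop :=
  ∃ s t : ℕ, 1 ≤ s ∧ s < t ∧ t ≤ n ∧ alphaSeq n s = x ∧ alphaSeq n t = y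

/-- `F ∈ T_s` : `α_s` is the `<_O`-least element of `F^c`. -/
def classT (n s : ℕ) (F : Finset ℕ) : Prop :=
  1 ≤ s ∧ s ≤ n ∧ alphaSeq n s ∈ cmpl n F ∧
    ∀ x ∈ cmpl n F, x ≠ alphaSeq n s → ltO n (alphaSeq n s) x

/-- `F ∈ T_s` together with the decomposition `F^c = {α_s} ⊔ {s₁, s₂}`, `s₁ < s₂`. -/
def cDecomp (n s s1 s2 : ℕ) (F : Finset ℕ) : Prop :=
  classT n s F ∧ s1 < s2 ∧ alphaSeq n s ≠ s1 ∧ alphaSeq n s ≠ s2 ∧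
    cmpl n F = {alphaSeq n s, s1, s2}

/-- The order `≪` on facets. -/
def llt (n : ℕ) (F F' : Finset ℕ) : Prop :=
  ∃ s t s1 s2 t1 t2, cDecomp n s s1 s2 F ∧ cDecomp n t t1 t2 F' ∧
    (s < t ∨ (s = t ∧ (s1 < t1 ∨ (s1 = t1 ∧ s2 < t2))))

/-- The exceptional set `D` of facets (conditions (D1)–(D4)). -/
def memD (n : ℕ) (F : Finset ℕ) : Prop :=
  ∃ s, classT n s F ∧
    ((alphaSeq n s = mVal n + 1 ∧
        cmpl n F = {alphaSeq n s, alphaSeq n s - 3, alphaSeq n s + 1}) ∨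
      (alphaSeq n s = mVal n - 1 ∧
        cmpl n F = {alphaSeq n s, alphaSeq n s - 1, alphaSeq n s + 3}) ∨
      (alphaSeq n s = mVal n + 1 ∧
        cmpl n F = {alphaSeq n s, alphaSeq n s - 4, alphaSeq n s - 3}) ∨
      (mVal n - 1 ≤ alphaSeq n s ∧ alphaSeq n s ≤ n - 6 ∧
        cmpl n F = {alphaSeq n s, alphaSeq n s + 3, alphaSeq n s + 4}))

/-- The shelling order `≺` on facets. -/
def precOrd (n : ℕ) (F F' : Finset ℕ) : Prop :=
  (¬ memD n F ∧ ¬ memD n F' ∧ llt n F F') ∨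
  (memD n F ∧ ¬ memD n F' ∧ ∃ s t, classT n s F ∧ classT n t F' ∧ s < t) ∨
  (¬ memD n F ∧ memD n F' ∧ ∃ s t, classT n s F ∧ classT n t F' ∧ s ≤ t) ∨
  (memD n F ∧ memD n F' ∧ llt n F F')

/-- `F` is a spanning facet for the shelling order `≺`. -/
def IsSpanningFacet (n : ℕ) (F : Finset ℕ) : Prop :=
  IsFacet n F ∧ ∀ lam ∈ F, ∃ G, IsFacet n G ∧ precOrd n G F ∧ G ∩ F = F.erase lam

/-- Condition (S1): `α_s = 3` and `s₁ ∈ V∖({0,1,…,2m−4} ∪ {n−1})`. -/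
def condS1 (n a s1 : ℕ) : Prop :=
  a = 3 ∧ s1 ∈ Finset.range n \ (Finset.range (2 * mVal n - 3) ∪ {n - 1})

/-- Condition (S2): `4 ≤ α_s ≤ m−2` and
`s₁ ∈ V∖({α_s−4, α_s−3, α_s−2} ∪ {α_s, …, 2m−α_s−1} ∪ {n−1})`. -/
def condS2 (n a s1 : ℕ) : Prop :=
  4 ≤ a ∧ a ≤ mVal n - 2 ∧
    s1 ∈ Finset.range n \
      (({a - 4, a - 3, a - 2} : Finset ℕ) ∪ Finset.Ico a (2 * mVal n - a) ∪ {n - 1})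

/-- Condition (S3): `m−1 ≤ α_s ≤ n−3` and
`s₁ ∈ V∖({ω, ω+1, …, α_s+3 (mod n)} ∪ {y})`, with `ω = min{2m−α_s, α_s−4}` and
`y = n−1` if `α_s < n−4`, `y = 0` if `α_s = n−4`, `y = 1` if `α_s > n−4`. -/
def condS3 (n a s1 : ℕ) : Prop :=
  mVal n - 1 ≤ a ∧ a ≤ n - 3 ∧
    s1 ∈ Finset.range n \
      ((Finset.Ico (min (2 * mVal n - a) (a - 4)) (a + 4)).image (· % n) ∪
        {if a < n - 4 then n - 1 else if a = n - 4 then 0 else 1})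

/-- The set `S` of facets. -/
def memS (n : ℕ) (F : Finset ℕ) : Prop :=
  IsFacet n F ∧ ∃ s s1, cDecomp n s s1 (n - 1) F ∧
    (condS1 n (alphaSeq n s) s1 ∨ condS2 n (alphaSeq n s) s1 ∨ condS3 n (alphaSeq n s) s1)


section Aux

lemma alpha_spec {n : ℕ} (hn : 9 ≤ n) (t : ℕ) (ht0 : 1 ≤ t) (ht : t ≤ n) :
    alphaSeq n t < n ∧
      ((t % 2 = 1 ∧ (alphaSeq n t = mVal n + t / 2 ∨ (alphaSeq n t = 0 ∧ mVal n + t / 2 = n))) ∨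
        (t % 2 = 0 ∧ alphaSeq n t + t / 2 = mVal n)) := by
  have hm : 2 * mVal n = n ∨ 2 * mVal n = n + 1 := by unfold mVal; omega
  rcases Nat.even_or_odd t with he | ho
  · have h2 : t % 2 = 0 := Nat.even_iff.mp he
    have hodd : Odd (t - 1) := by rw [Nat.odd_iff]; omega
    have hval : alphaSeq n t = mVal n - t / 2 := by
      unfold alphaSeq
      rw [hodd.neg_one_pow, neg_one_mul]
      rw [Int.emod_eq_of_lt (by omega) (by omega)]
      omega
    refine ⟨by omega, Or.inr ⟨h2, by omega⟩⟩
  · have h2 : t % 2 = 1 := Nat.odd_iff.mp ho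
    have heven : Even (t - 1) := by rw [Nat.even_iff]; omega
    have hval : alphaSeq n t = (mVal n + t / 2) % n := by
      unfold alphaSeq
      rw [heven.neg_one_pow, one_mul]
      have h1 : ((mVal n : ℤ) + ((t / 2 : ℕ) : ℤ)) = (((mVal n + t / 2 : ℕ)) : ℤ) := by
        push_cast; ring
      rw [h1, ← Int.natCast_mod, Int.toNat_natCast]
    have hle : mVal n + t / 2 ≤ n := by omega
    rcases Nat.lt_or_ge (mVal n + t / 2) n with hlt | hge
    · rw [Nat.mod_eq_of_lt hlt] at hval
      exact ⟨by omega, Or.inl ⟨h2, Or.inl hval⟩⟩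
    · have : mVal n + t / 2 = n := by omega
      rw [this, Nat.mod_self] at hval
      exact ⟨by omega, Or.inl ⟨h2, Or.inr ⟨hval, this⟩⟩⟩

lemma alpha_inj {n : ℕ} (hn : 9 ≤ n) {p q : ℕ} (hp0 : 1 ≤ p) (hp : p ≤ n)
    (hq0 : 1 ≤ q) (hq : q ≤ n) (h : alphaSeq n p = alphaSeq n q) : p = q := by
  have hm : 2 * mVal n = n ∨ 2 * mVal n = n + 1 := by unfold mVal; omega
  have S1 := alpha_spec hn p hp0 hp
  have S2 := alpha_spec hn q hq0 hq
  omega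

lemma alpha_late {n : ℕ} (hn : 9 ≤ n) {t : ℕ} (ht0 : 1 ≤ t) (ht : t ≤ n) :
    (alphaSeq n t = 0 ∨ alphaSeq n t = 1 ∨ alphaSeq n t = 2 ∨
      alphaSeq n t = n - 2 ∨ alphaSeq n t = n - 1) ↔ n - 4 ≤ t := by
  have hm : 2 * mVal n = n ∨ 2 * mVal n = n + 1 := by unfold mVal; omega
  have S := alpha_spec hn t ht0 ht
  omega

lemma exists_pos_nm1 {n : ℕ} (hn : 9 ≤ n) :
    ∃ p, 1 ≤ p ∧ p ≤ n ∧ n - 4 ≤ p ∧ alphaSeq n p = n - 1 := by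
  have hm : 2 * mVal n = n ∨ 2 * mVal n = n + 1 := by unfold mVal; omega
  rcases Nat.even_or_odd n with he | ho
  · have h2 : n % 2 = 0 := Nat.even_iff.mp he
    have S := alpha_spec hn (n - 1) (by omega) (by omega)
    exact ⟨n - 1, by omega, by omega, by omega, by omega⟩
  · have h2 : n % 2 = 1 := Nat.odd_iff.mp ho
    have S := alpha_spec hn (n - 2) (by omega) (by omega)
    exact ⟨n - 2, by omega, by omega, by omega, by omega⟩

lemma ltO_asymm {n x y : ℕ} (hn : 9 ≤ n) (h1 : ltO n x y) (h2 : ltO n y x) : False := by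
  obtain ⟨p, q, hp1, hpq, hqn, hpx, hqy⟩ := h1
  obtain ⟨p', q', hp1', hpq', hqn', hpy', hqx'⟩ := h2
  have e1 : p = q' := alpha_inj hn hp1 (by omega) (by omega) (by omega) (by rw [hpx, hqx'])
  have e2 : q = p' := alpha_inj hn (by omega) hqn hp1' (by omega) (by rw [hqy, hpy'])
  omega

lemma adj_of {n x y : ℕ} (hn : 9 ≤ n) (hx : x < n) (hy : y < n)
    (h : x + 1 = y ∨ x + 2 = y ∨ y + 1 = x ∨ y + 2 = x ∨
      x + 1 = y + n ∨ x + 2 = y + n ∨ y + 1 = x + n ∨ y + 2 = x + n) :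
    (sqCycle n).Adj x y := by
  refine ⟨hx, hy, by omega, ?_⟩
  rcases h with h | h | h | h | h | h | h | h
  · left; rw [h]; exact Nat.mod_eq_of_lt hy
  · right; left; rw [h]; exact Nat.mod_eq_of_lt hy
  · right; right; left; rw [h]; exact Nat.mod_eq_of_lt hx
  · right; right; right; rw [h]; exact Nat.mod_eq_of_lt hx
  · left; rw [h, Nat.add_mod_right]; exact Nat.mod_eq_of_lt hy
  · right; left; rw [h, Nat.add_mod_right]; exact Nat.mod_eq_of_lt hy
  · right; right; left; rw [h, Nat.add_mod_right]; exact Nat.mod_eq_of_lt hx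
  · right; right; right; rw [h, Nat.add_mod_right]; exact Nat.mod_eq_of_lt hx

lemma connected_center (n : ℕ) (S : Finset ℕ) (c : ℕ) (hc : c ∈ S)
    (h : ∀ x ∈ S, x ≠ c → (sqCycle n).Adj c x) :
    ((sqCycle n).induce (↑S : Set ℕ)).Connected := by
  rw [SimpleGraph.connected_iff]
  have hc' : c ∈ (↑S : Set ℕ) := by simpa using hc
  refine ⟨?_, ⟨⟨c, hc'⟩⟩⟩
  have key : ∀ w : (↑S : Set ℕ), ((sqCycle n).induce (↑S : Set ℕ)).Reachable ⟨c, hc'⟩ w := by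
    rintro ⟨w, hw⟩
    rcases eq_or_ne w c with rfl | hne
    · exact SimpleGraph.Reachable.refl _
    · have hadj : (sqCycle n).Adj c w := h w (by simpa using hw) hne
      exact SimpleGraph.Adj.reachable hadj
  intro u v
  exact (key u).symm.trans (key v)

lemma kill {n : ℕ} (hn : 9 ≤ n) (F : Finset ℕ) (hSpan : IsSpanningFacet n F)
    (lam : ℕ) (hlam : lam < n)
    (hadj : ∀ x ∈ cmpl n F, x ≠ lam → (sqCycle n).Adj lam x) : False := by
  obtain ⟨⟨hFsub, hFcard, hFconn⟩, hsp⟩ := hSpan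
  by_cases hmem : lam ∈ cmpl n F
  · exact hFconn (connected_center n _ lam hmem hadj)
  · have hlF : lam ∈ F := by
      by_contra hF
      exact hmem (by simp [cmpl, Finset.mem_sdiff, Finset.mem_range, hlam, hF])
    obtain ⟨G, ⟨hGsub, hGcard, hGconn⟩, _, hGF⟩ := hsp lam hlF
    apply hGconn
    have hlamG : lam ∈ cmpl n G := by
      have : lam ∉ G := by
        intro h
        have : lam ∈ G ∩ F := Finset.mem_inter.mpr ⟨h, hlF⟩
        rw [hGF] at this
        exact (Finset.mem_erase.mp this).1 rfl
      simp [cmpl, Finset.mem_sdiff, Finset.mem_range, hlam, this]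
    apply connected_center n _ lam hlamG
    intro x hx hne
    have hxF : x ∈ cmpl n F := by
      simp only [cmpl, Finset.mem_sdiff, Finset.mem_range] at hx ⊢
      refine ⟨hx.1, fun hxF => hx.2 ?_⟩
      have : x ∈ G ∩ F := by rw [hGF]; exact Finset.mem_erase.mpr ⟨hne, hxF⟩
      exact (Finset.mem_inter.mp this).1
    exact hadj x hxF hne

lemma notD {n : ℕ} (hn : 9 ≤ n) (F : Finset ℕ) (hSpan : IsSpanningFacet n F) :
    ¬ memD n F := by
  rintro ⟨t, _, hforms⟩
  have hm : 2 * mVal n = n ∨ 2 * mVal n = n + 1 := by unfold mVal; omega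
  set b := alphaSeq n t with hb
  rcases hforms with ⟨hbv, hc⟩ | ⟨hbv, hc⟩ | ⟨hbv, hc⟩ | ⟨hb1, hb2, hc⟩
  · refine kill hn F hSpan (b - 1) (by omega) ?_
    intro x hx hne
    rw [hc] at hx
    simp only [Finset.mem_insert, Finset.mem_singleton] at hx
    rcases hx with rfl | rfl | rfl <;> exact adj_of hn (by omega) (by omega) (by omega)
  · refine kill hn F hSpan (b + 1) (by omega) ?_
    intro x hx hne
    rw [hc] at hx
    simp only [Finset.mem_insert, Finset.mem_singleton] at hx
    rcases hx with rfl | rfl | rfl <;> exact adj_of hn (by omega) (by omega) (by omega)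
  · refine kill hn F hSpan (b - 2) (by omega) ?_
    intro x hx hne
    rw [hc] at hx
    simp only [Finset.mem_insert, Finset.mem_singleton] at hx
    rcases hx with rfl | rfl | rfl <;> exact adj_of hn (by omega) (by omega) (by omega)
  · refine kill hn F hSpan (b + 2) (by omega) ?_
    intro x hx hne
    rw [hc] at hx
    simp only [Finset.mem_insert, Finset.mem_singleton] at hx
    rcases hx with rfl | rfl | rfl <;> exact adj_of hn (by omega) (by omega) (by omega)

lemma cDecomp_unique {n : ℕ} (hn : 9 ≤ n) {s s1 s2 t t1 t2 : ℕ} {F : Finset ℕ}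
    (h1 : cDecomp n s s1 s2 F) (h2 : cDecomp n t t1 t2 F) :
    s = t ∧ s1 = t1 ∧ s2 = t2 := by
  obtain ⟨⟨hs1n, hsn, hsmem, hsmin⟩, hlt12, hne1, hne2, hcmpl⟩ := h1
  obtain ⟨⟨ht1n, htn, htmem, htmin⟩, hlt12', hne1', hne2', hcmpl'⟩ := h2
  have hst : alphaSeq n s = alphaSeq n t := by
    by_contra hne
    exact ltO_asymm hn (hsmin _ htmem (Ne.symm hne)) (htmin _ hsmem hne)
  have hseq : s = t := alpha_inj hn hs1n hsn ht1n htn hst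
  subst hseq
  have heq : ({alphaSeq n s, s1, s2} : Finset ℕ) = {alphaSeq n s, t1, t2} := by
    rw [← hcmpl, hcmpl']
  have m1 : s1 = alphaSeq n s ∨ s1 = t1 ∨ s1 = t2 := by
    have : s1 ∈ ({alphaSeq n s, t1, t2} : Finset ℕ) := by rw [← heq]; simp
    simpa using this
  have m2 : s2 = alphaSeq n s ∨ s2 = t1 ∨ s2 = t2 := by
    have : s2 ∈ ({alphaSeq n s, t1, t2} : Finset ℕ) := by rw [← heq]; simp
    simpa using this
  have m3 : t1 = alphaSeq n s ∨ t1 = s1 ∨ t1 = s2 := by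
    have : t1 ∈ ({alphaSeq n s, s1, s2} : Finset ℕ) := by rw [heq]; simp
    simpa using this
  have m4 : t2 = alphaSeq n s ∨ t2 = s1 ∨ t2 = s2 := by
    have : t2 ∈ ({alphaSeq n s, s1, s2} : Finset ℕ) := by rw [heq]; simp
    simpa using this
  refine ⟨rfl, ?_, ?_⟩ <;> omega

end Aux

/-- If `F` is a spanning facet of `Δ₃(Wₙ)` for the shelling order
`≺`, with `F ∈ T_s` and `F^c = {α_s} ⊔ {s₁, s₂}`, then `α_s ∉ {0, 1, 2, n−2, n−1}`
and `s₂ = n−1`. -/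
theorem spanning_alpha_and_s2 (n : ℕ) (hn : 9 ≤ n) (F : Finset ℕ)
    (hSpan : IsSpanningFacet n F) (s s1 s2 : ℕ) (hdec : cDecomp n s s1 s2 F) :
    alphaSeq n s ∉ ({0, 1, 2, n - 2, n - 1} : Finset ℕ) ∧ s2 = n - 1 := by
  obtain ⟨⟨hs1n, hsn, hamem, hmin⟩, hlt12, hne1, hne2, hcmpl⟩ := hdec
  set a := alphaSeq n s with ha
  -- basic bounds on elements of the complement
  have hsub : cmpl n F ⊆ Finset.range n := Finset.sdiff_subset
  have haRange : a < n := by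
    have := hsub hamem; simpa [Finset.mem_range] using this
  have hs1R : s1 < n := by
    have : s1 ∈ cmpl n F := by rw [hcmpl]; simp
    have := hsub this; simpa [Finset.mem_range] using this
  have hs2R : s2 < n := by
    have : s2 ∈ cmpl n F := by rw [hcmpl]; simp
    have := hsub this; simpa [Finset.mem_range] using this
  -- Part A : a is not among the five O-late vertices
  have hA : ¬ (a = 0 ∨ a = 1 ∨ a = 2 ∨ a = n - 2 ∨ a = n - 1) := by
    intro h5
    refine kill hn F hSpan 0 (by omega) ?_
    intro x hx hne
    have hxlt : x < n := by
      have := hsub hx; simpa [Finset.mem_range] using this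
    have hx5 : x = 0 ∨ x = 1 ∨ x = 2 ∨ x = n - 2 ∨ x = n - 1 := by
      rcases eq_or_ne x a with rfl | hxa
      · exact h5
      · obtain ⟨p, q, hp1, hpq, hqn, hpa, hqx⟩ := hmin x hx hxa
        have hps : p = s := alpha_inj hn hp1 (by omega) hs1n hsn (by rw [hpa])
        have hs4 : n - 4 ≤ s := (alpha_late hn hs1n hsn).mp h5
        have hq4 : n - 4 ≤ q := by omega
        have := (alpha_late hn (show 1 ≤ q by omega) hqn).mpr hq4
        rw [hqx] at this
        exact this
    rcases hx5 with rfl | rfl | rfl | rfl | rfl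
    · exact absurd rfl hne
    · exact adj_of hn (by omega) (by omega) (by omega)
    · exact adj_of hn (by omega) (by omega) (by omega)
    · exact adj_of hn (by omega) (by omega) (by omega)
    · exact adj_of hn (by omega) (by omega) (by omega)
  have hDF : ¬ memD n F := notD hn F hSpan
  have hs5 : s ≤ n - 5 := by
    by_contra hcon
    exact hA ((alpha_late hn hs1n hsn).mpr (by omega))
  obtain ⟨r, hr1, hrn, hr4, hrval⟩ := exists_pos_nm1 hn
  -- Part B : n - 1 belongs to the complement
  have hnm1 : n - 1 ∈ cmpl n F := by
    by_contra hmem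
    have hlF : (n - 1) ∈ F := by
      by_contra hF
      exact hmem (by simp [cmpl, Finset.mem_sdiff, Finset.mem_range, hF]; omega)
    obtain ⟨G, ⟨hGsub, hGcard, hGconn⟩, hord, hGF⟩ := hSpan.2 (n - 1) hlF
    -- structure of the complement of G
    have hlamG : n - 1 ∈ cmpl n G := by
      have : n - 1 ∉ G := by
        intro h
        have : n - 1 ∈ G ∩ F := Finset.mem_inter.mpr ⟨h, hlF⟩
        rw [hGF] at this
        exact (Finset.mem_erase.mp this).1 rfl
      simp [cmpl, Finset.mem_sdiff, Finset.mem_range, this]; omega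
    have hGsub' : ∀ x ∈ cmpl n G, x = n - 1 ∨ x ∈ cmpl n F := by
      intro x hx
      simp only [cmpl, Finset.mem_sdiff, Finset.mem_range] at hx ⊢
      rcases eq_or_ne x (n - 1) with rfl | hne
      · exact Or.inl rfl
      · refine Or.inr ⟨hx.1, fun hxF => hx.2 ?_⟩
        have : x ∈ G ∩ F := by rw [hGF]; exact Finset.mem_erase.mpr ⟨hne, hxF⟩
        exact (Finset.mem_inter.mp this).1
    -- any class index of G is at least s
    have key : ∀ p, classT n p G → s ≤ p := by
      rintro p ⟨hp1, hpn, hpmem, _⟩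
      rcases hGsub' _ hpmem with hv | hv
      · have : p = r := alpha_inj hn hp1 hpn hr1 hrn (by rw [hv, hrval])
        omega
      · rw [hcmpl] at hv
        simp only [Finset.mem_insert, Finset.mem_singleton] at hv
        rcases hv with hv | hv | hv
        · have : p = s := alpha_inj hn hp1 hpn hs1n hsn (by rw [hv])
          omega
        · obtain ⟨u, v, hu1, huv, hvn, hua, hvx⟩ := hmin s1 (by rw [hcmpl]; simp) (Ne.symm hne1)
          have hus : u = s := alpha_inj hn hu1 (by omega) hs1n hsn (by rw [hua])
          have hvp : v = p := alpha_inj hn (by omega) hvn hp1 hpn (by rw [hvx, hv])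
          omega
        · obtain ⟨u, v, hu1, huv, hvn, hua, hvx⟩ := hmin s2 (by rw [hcmpl]; simp) (Ne.symm hne2)
          have hus : u = s := alpha_inj hn hu1 (by omega) hs1n hsn (by rw [hua])
          have hvp : v = p := alpha_inj hn (by omega) hvn hp1 hpn (by rw [hvx, hv])
          omega
    -- any class index of F equals s
    have keyF : ∀ q, classT n q F → q = s := by
      rintro q ⟨hq1, hqn, hqmem, hqmin⟩
      have : alphaSeq n q = a := by
        by_contra hne
        exact ltO_asymm hn (hqmin _ hamem (fun h => hne h.symm)) (hmin _ hqmem hne)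
      exact alpha_inj hn hq1 hqn hs1n hsn this
    have hs2lt : s2 < n - 1 := by
      rcases eq_or_ne s2 (n - 1) with h | h
      · exact absurd (by rw [← h]; rw [hcmpl]; simp) hmem
      · omega
    rcases hord with ⟨_, _, hllt⟩ | ⟨_, _, p, q, hpG, hqF, hpq⟩ | ⟨_, hf, _⟩ | ⟨hf1, hf, _⟩
    · obtain ⟨p, q, p1, p2, q1, q2, hdG, hdF', hor⟩ := hllt
      obtain ⟨hq', hq1', hq2'⟩ := cDecomp_unique hn hdF'
        ⟨⟨hs1n, hsn, hamem, hmin⟩, hlt12, hne1, hne2, hcmpl⟩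
      rw [hq', hq1', hq2'] at hor
      have hps : s ≤ p := key p hdG.1
      have hpe : p = s := by omega
      obtain ⟨⟨_, _, _, _⟩, hp12, hpne1, hpne2, hpcmpl⟩ := hdG
      have hpcmpl' : cmpl n G = {a, p1, p2} := by rw [hpcmpl, hpe]
      have hpne1' : a ≠ p1 := by rw [ha, ← hpe]; exact hpne1
      have hp2n : p2 < n := by
        have : p2 ∈ cmpl n G := by rw [hpcmpl']; simp
        have := Finset.sdiff_subset this
        simpa [Finset.mem_range] using this
      have hmem1 : n - 1 = a ∨ n - 1 = p1 ∨ n - 1 = p2 := by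
        have := hlamG
        rw [hpcmpl'] at this
        simpa using this
      have hp2v : p2 = n - 1 := by omega
      have hp1v : p1 = s1 ∨ p1 = s2 := by
        have hp1mem : p1 ∈ cmpl n G := by rw [hpcmpl']; simp
        rcases hGsub' p1 hp1mem with h | h
        · omega
        · rw [hcmpl] at h
          simp only [Finset.mem_insert, Finset.mem_singleton] at h
          rcases h with h | h | h
          · exact absurd h.symm hpne1'
          · exact Or.inl h
          · exact Or.inr h
      omega
    · have hqs : q = s := keyF q hqF
      have := key p hpG
      omega
    · exact hDF hf
    · exact hDF hf
  -- conclusion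
  rw [hcmpl] at hnm1
  simp only [Finset.mem_insert, Finset.mem_singleton] at hnm1
  constructor
  · intro hmem
    simp only [Finset.mem_insert, Finset.mem_singleton] at hmem
    exact hA hmem
  · omega
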